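/- Let X be a set, let φ : ℝ → X → X be an action of the additive group ℝ on X (φ(0) = id and φ(t + t′) = φ(t) ∘ φ(t′) for all t, t′), and let σ : X → X satisfy σ ∘ φ(t) = φ(t) ∘ σ for all t ∈ ℝ and σ^N = id for some integer N ≥ 1. Suppose ε > 0 is such that every point x ∈ X with φ(t)(x) = x for some t ∈ (0, ε) is a fixed point of the whole flow (i.e. φ(t′)(x) = x for all t′ ∈ ℝ). Then for every real s with 0 < s and N·s < ε and every x ∈ X: φ(s)(σ(x)) = x holds if and only if σ(x) = x and φ(t)(x) = x for all t ∈ ℝ. In other words, the fixed points of φ(s) ∘ σ are exactly the fixed points of the flow that are also fixed by σ. -/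
import Mathlib


/-- Let `φ` be a flow on a set `X` and `σ` a finite-order automorphism of the flow.
If every point that is fixed by some `φ t` with `0 < t < ε` is fixed by the whole flow
(all periodic orbits have length `≥ ε`), then for `0 < s` with `N·s < ε`, the fixed
points of `φ s ∘ σ` are exactly the fixed points of the flow that are fixed by `σ`. -/
theorem fixed_points_of_flow_automorphism {X : Type*}
    (φ : ℝ → X → X) (hφ0 : φ 0 = id)
    (hφadd : ∀ t t' : ℝ, φ (t + t') = φ t ∘ φ t')
    (σ : X → X) (hσφ : ∀ t : ℝ, σ ∘ φ t = φ t ∘ σ)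
    (N : ℕ) (hN : 1 ≤ N) (hσN : σ^[N] = id)
    (ε : ℝ) (hε : 0 < ε)
    (hper : ∀ (x : X) (t : ℝ), 0 < t → t < ε → φ t x = x → ∀ t' : ℝ, φ t' x = x) :
    ∀ s : ℝ, 0 < s → (N : ℝ) * s < ε →
      ∀ x : X, φ s (σ x) = x ↔ (σ x = x ∧ ∀ t : ℝ, φ t x = x) := by
  intro s hs hNs x
  constructor
  · intro hx
    -- iterate lemma
    have hiter : ∀ n : ℕ, (fun y => φ s (σ y))^[n] x = φ ((n : ℝ) * s) (σ^[n] x) := by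
      intro n
      induction n with
      | zero => simp [hφ0]
      | succ n ih =>
        rw [Function.iterate_succ_apply', ih]
        have h1 : σ (φ ((n : ℝ) * s) (σ^[n] x)) = φ ((n : ℝ) * s) (σ (σ^[n] x)) :=
          congrFun (hσφ ((n : ℝ) * s)) (σ^[n] x)
        simp only [h1]
        have h2 : φ (s + (n : ℝ) * s) (σ (σ^[n] x))
            = φ s (φ ((n : ℝ) * s) (σ (σ^[n] x))) :=
          congrFun (hφadd s ((n : ℝ) * s)) _
        rw [← h2]
        have : ((n : ℝ) + 1) * s = s + (n : ℝ) * s := by ring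
        rw [Function.iterate_succ_apply', show ((n : ℕ) + 1 : ℕ) = n + 1 from rfl]
        push_cast
        rw [this]
    have hfix : (fun y => φ s (σ y))^[N] x = x := Function.iterate_fixed (f := fun y => φ s (σ y)) hx N
    rw [hiter N, hσN] at hfix
    have hNsx : φ ((N : ℝ) * s) x = x := hfix
    have hNpos : 0 < (N : ℝ) * s := by
      have : (0 : ℝ) < (N : ℝ) := by exact_mod_cast Nat.lt_of_lt_of_le Nat.zero_lt_one hN
      positivity
    have hall : ∀ t' : ℝ, φ t' x = x := hper x ((N : ℝ) * s) hNpos hNs hNsx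
    refine ⟨?_, hall⟩
    have h1 : φ (-s) (φ s (σ x)) = σ x := by
      have := congrFun (hφadd (-s) s) (σ x)
      simp only [neg_add_cancel, hφ0] at this
      exact this.symm
    calc σ x = φ (-s) (φ s (σ x)) := h1.symm
      _ = φ (-s) x := by rw [hx]
      _ = x := hall (-s)
  · rintro ⟨hσx, hall⟩
    rw [hσx]
    exact hall s
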